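/- With the distribution P(I) ∝ e_Iᵀ L⁻¹ e_I over subsets I ⊆ [n] of size τ, for every x ∈ ℝ^n it holds that 𝔼_I[‖G_I x‖²_L] = ((τ−1)/(n−1)) ‖G_{[n]} x‖²_L, where ‖v‖²_L = vᵀ L v. -/

import Mathlib

open Matrix BigOperators Finset

lemma count_subset' {n τ : ℕ} (s : Finset (Fin n)) (hs : s.card ≤ τ) :
    ((Finset.powersetCard τ (Finset.univ : Finset (Fin n))).filter (fun I => s ⊆ I)).card
      = (n - s.card).choose (τ - s.card) := by
  have h1 : ((Finset.univ : Finset (Fin n)) \ s).card = n - s.card := by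
    rw [Finset.card_sdiff_of_subset (Finset.subset_univ s), Finset.card_univ, Fintype.card_fin]
  rw [← h1, ← Finset.card_powersetCard]
  apply Finset.card_bij' (fun I _ => I \ s) (fun J _ => J ∪ s)
  · intro I hI
    simp only [Finset.mem_filter, Finset.mem_powersetCard] at hI ⊢
    obtain ⟨⟨-, hcard⟩, hsub⟩ := hI
    constructor
    · exact Finset.sdiff_subset_sdiff (Finset.subset_univ I) le_rfl
    · rw [Finset.card_sdiff_of_subset hsub, hcard]
  · intro J hJ
    simp only [Finset.mem_filter, Finset.mem_powersetCard] at hJ ⊢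
    obtain ⟨hsub, hcard⟩ := hJ
    have hdisj : Disjoint J s := Finset.disjoint_of_subset_left hsub Finset.sdiff_disjoint
    refine ⟨⟨Finset.subset_univ _, ?_⟩, Finset.subset_union_right⟩
    rw [Finset.card_union_of_disjoint hdisj, hcard]
    omega
  · intro I hI
    simp only [Finset.mem_filter] at hI
    exact Finset.sdiff_union_of_subset hI.2
  · intro J hJ
    simp only [Finset.mem_powersetCard] at hJ
    have hdisj : Disjoint J s := Finset.disjoint_of_subset_left hJ.1 Finset.sdiff_disjoint
    rw [Finset.union_sdiff_right, Finset.sdiff_eq_self_of_disjoint hdisj]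

lemma quad_formula' {n : ℕ} (L : Fin n → ℝ) (hL : ∀ i, 0 < L i) (x : Fin n → ℝ)
    (I : Finset (Fin n)) (hI : I.Nonempty) :
    ((Matrix.diagonal (fun i => (if i ∈ I then (1:ℝ) else 0) * (L i)⁻¹) -
        (∑ i ∈ I, (L i)⁻¹)⁻¹ • Matrix.vecMulVec (fun i => (L i)⁻¹ * if i ∈ I then 1 else 0)
          (fun i => (L i)⁻¹ * if i ∈ I then 1 else 0)) *ᵥ x) ⬝ᵥ
      (Matrix.diagonal L *ᵥ
        ((Matrix.diagonal (fun i => (if i ∈ I then (1:ℝ) else 0) * (L i)⁻¹) -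
          (∑ i ∈ I, (L i)⁻¹)⁻¹ • Matrix.vecMulVec (fun i => (L i)⁻¹ * if i ∈ I then 1 else 0)
            (fun i => (L i)⁻¹ * if i ∈ I then 1 else 0)) *ᵥ x))
      = (∑ i ∈ I, (L i)⁻¹ * x i ^ 2) - (∑ i ∈ I, (L i)⁻¹)⁻¹ * (∑ i ∈ I, (L i)⁻¹ * x i) ^ 2 := by
  have sumI : ∀ (f : Fin n → ℝ), ∑ i ∈ I, f i = ∑ i : Fin n, (if i ∈ I then f i else 0) := by
    intro f; rw [Finset.sum_ite_mem, Finset.univ_inter]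
  set c : ℝ := ∑ i ∈ I, (L i)⁻¹ with hc_def
  have hc : 0 < c := Finset.sum_pos (fun i _ => inv_pos.2 (hL i)) hI
  set T : ℝ := ∑ i ∈ I, (L i)⁻¹ * x i with hT_def
  set y := ((Matrix.diagonal (fun i => (if i ∈ I then (1:ℝ) else 0) * (L i)⁻¹) -
        c⁻¹ • Matrix.vecMulVec (fun i => (L i)⁻¹ * if i ∈ I then 1 else 0)
          (fun i => (L i)⁻¹ * if i ∈ I then 1 else 0)) *ᵥ x) with hy_def
  have hy : ∀ j, y j = (if j ∈ I then (1:ℝ) else 0) * ((L j)⁻¹ * (x j - c⁻¹ * T)) := by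
    intro j
    have hvv : (Matrix.vecMulVec (fun i => (L i)⁻¹ * if i ∈ I then (1:ℝ) else 0)
        (fun i => (L i)⁻¹ * if i ∈ I then 1 else 0) *ᵥ x) j
        = ((L j)⁻¹ * if j ∈ I then 1 else 0) * T := by
      simp only [Matrix.mulVec, Matrix.vecMulVec_apply, dotProduct]
      rw [hT_def, sumI (fun i => (L i)⁻¹ * x i), Finset.mul_sum]
      congr 1; ext i
      by_cases h : i ∈ I <;> simp [h] <;> ring
    rw [hy_def, Matrix.sub_mulVec, Matrix.smul_mulVec]
    simp only [Pi.sub_apply, Pi.smul_apply, Matrix.mulVec_diagonal, smul_eq_mul, hvv]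
    by_cases h : j ∈ I <;> simp [h] <;> ring
  have hquad : y ⬝ᵥ (Matrix.diagonal L *ᵥ y) = ∑ j ∈ I, (L j)⁻¹ * (x j - c⁻¹ * T) ^ 2 := by
    simp only [dotProduct, Matrix.mulVec_diagonal]
    rw [sumI (fun j => (L j)⁻¹ * (x j - c⁻¹ * T) ^ 2)]
    congr 1; ext j
    rw [hy j]
    by_cases h : j ∈ I
    · simp only [h, if_true, one_mul]
      have := (hL j).ne'
      field_simp
    · simp [h]
  rw [hquad]
  have expand : ∀ j ∈ I, (L j)⁻¹ * (x j - c⁻¹ * T) ^ 2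
      = (L j)⁻¹ * x j ^ 2 - (2 * c⁻¹ * T) * ((L j)⁻¹ * x j) + (c⁻¹ ^ 2 * T ^ 2) * (L j)⁻¹ := by
    intro j _; ring
  rw [Finset.sum_congr rfl expand, Finset.sum_add_distrib, Finset.sum_sub_distrib,
    ← Finset.mul_sum, ← Finset.mul_sum, ← hT_def, ← hc_def]
  field_simp
  ring

theorem stmt5 {n : ℕ} (τ : ℕ) (hτ : 2 ≤ τ) (hτn : τ ≤ n)
    (L : Fin n → ℝ) (hL : ∀ i, 0 < L i) (x : Fin n → ℝ) :
    let eI : Finset (Fin n) → (Fin n → ℝ) := fun I i => if i ∈ I then 1 else 0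
    let c : Finset (Fin n) → ℝ := fun I => ∑ i ∈ I, (L i)⁻¹
    let v : Finset (Fin n) → (Fin n → ℝ) := fun I i => (L i)⁻¹ * eI I i
    let G : Finset (Fin n) → Matrix (Fin n) (Fin n) ℝ := fun I =>
      Matrix.diagonal (fun i => eI I i * (L i)⁻¹) -
        (c I)⁻¹ • Matrix.vecMulVec (v I) (v I)
    let Psets := Finset.powersetCard τ (Finset.univ : Finset (Fin n))
    let p : Finset (Fin n) → ℝ := fun I => c I / ∑ J ∈ Psets, c J
    let quadL : (Fin n → ℝ) → ℝ := fun w => w ⬝ᵥ (Matrix.diagonal L *ᵥ w)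
    ∑ I ∈ Psets, p I * quadL (G I *ᵥ x)
      = (((τ : ℝ) - 1) / ((n : ℝ) - 1)) * quadL (G Finset.univ *ᵥ x) := by
  intro eI c v G Psets p quadL
  obtain ⟨t, rfl⟩ : ∃ t, τ = t + 2 := ⟨τ - 2, by omega⟩
  obtain ⟨m, rfl⟩ : ∃ m, n = m + 2 := ⟨n - 2, by omega⟩
  have htm : t ≤ m := by omega
  set A : Fin (m + 2) → ℝ := fun i => (L i)⁻¹ with hA_def
  have hsumI : ∀ (I : Finset (Fin (m + 2))) (f : Fin (m + 2) → ℝ),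
      ∑ i ∈ I, f i = ∑ i : Fin (m + 2), (if i ∈ I then f i else 0) := by
    intro I f; rw [Finset.sum_ite_mem, Finset.univ_inter]
  set N1 : ℕ := (m + 1).choose (t + 1) with hN1_def
  set N2 : ℕ := m.choose t with hN2_def
  have hN1pos : 0 < N1 := Nat.choose_pos (by omega)
  -- counting lemmas
  have hcount1 : ∀ i : Fin (m + 2), (Psets.filter (fun I => i ∈ I)).card = N1 := by
    intro i
    have := count_subset' (τ := t + 2) ({i} : Finset (Fin (m + 2))) (by simp)
    simp only [Finset.card_singleton, Finset.singleton_subset_iff] at this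
    simpa [Psets] using this
  have hcount2 : ∀ i j : Fin (m + 2), i ≠ j →
      (Psets.filter (fun I => i ∈ I ∧ j ∈ I)).card = N2 := by
    intro i j hij
    have hcard : ({i, j} : Finset (Fin (m + 2))).card = 2 := Finset.card_pair hij
    have := count_subset' (τ := t + 2) ({i, j} : Finset (Fin (m + 2))) (by omega)
    rw [hcard] at this
    simp only [Finset.insert_subset_iff, Finset.singleton_subset_iff] at this
    simpa [Psets] using this
  have hind : ∀ i j : Fin (m + 2),
      ∑ I ∈ Psets, (if i ∈ I then (1:ℝ) else 0) * (if j ∈ I then 1 else 0)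
        = if i = j then (N1 : ℝ) else (N2 : ℝ) := by
    intro i j
    have hb : ∀ I : Finset (Fin (m + 2)), (if i ∈ I then (1:ℝ) else 0) * (if j ∈ I then 1 else 0)
        = if (i ∈ I ∧ j ∈ I) then 1 else 0 := by
      intro I; by_cases h1 : i ∈ I <;> by_cases h2 : j ∈ I <;> simp [h1, h2]
    rw [Finset.sum_congr rfl (fun I _ => hb I), Finset.sum_boole]
    by_cases hij : i = j
    · subst hij
      rw [if_pos rfl]
      norm_cast
      simpa only [and_self] using hcount1 i
    · simp only [hij, if_false]
      norm_cast
      exact hcount2 i j hij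
  -- quadratic forms
  have hne : ∀ I ∈ Psets, I.Nonempty := by
    intro I hI
    rw [Finset.mem_powersetCard] at hI
    rw [← Finset.card_pos, hI.2]; omega
  have hcpos : ∀ I : Finset (Fin (m + 2)), I.Nonempty → 0 < c I := by
    intro I hI
    exact Finset.sum_pos (fun i _ => inv_pos.2 (hL i)) hI
  have hquadI : ∀ I : Finset (Fin (m + 2)), I.Nonempty →
      quadL (G I *ᵥ x) = (∑ i ∈ I, (L i)⁻¹ * x i ^ 2)
        - (c I)⁻¹ * (∑ i ∈ I, (L i)⁻¹ * x i) ^ 2 := by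
    intro I hI
    simpa only [quadL, G, eI, v, c] using quad_formula' L hL x I hI
  set Q : ℝ := ∑ i : Fin (m + 2), (L i)⁻¹ * x i ^ 2 with hQ_def
  set B : ℝ := ∑ i : Fin (m + 2), (L i)⁻¹ * x i with hB_def
  set C : ℝ := ∑ i : Fin (m + 2), (L i)⁻¹ with hC_def
  have hCpos : 0 < C := Finset.sum_pos (fun i _ => inv_pos.2 (hL i)) Finset.univ_nonempty
  have hquadU : quadL (G Finset.univ *ᵥ x) = Q - C⁻¹ * B ^ 2 := by
    rw [hquadI Finset.univ Finset.univ_nonempty]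
  set S : ℝ := ∑ J ∈ Psets, c J with hS_def
  have hS : S = (N1 : ℝ) * C := by
    rw [hS_def]
    calc ∑ J ∈ Psets, c J
        = ∑ J ∈ Psets, ∑ i : Fin (m + 2), (if i ∈ J then (L i)⁻¹ else 0) := by
          apply Finset.sum_congr rfl; intro J _; exact hsumI J _
      _ = ∑ i : Fin (m + 2), ∑ J ∈ Psets, (if i ∈ J then (L i)⁻¹ else 0) := Finset.sum_comm
      _ = ∑ i : Fin (m + 2), (N1 : ℝ) * (L i)⁻¹ := by
          apply Finset.sum_congr rfl; intro i _
          rw [Finset.sum_ite, Finset.sum_const, Finset.sum_const_zero, add_zero, hcount1 i,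
            nsmul_eq_mul]
      _ = (N1 : ℝ) * C := by rw [← Finset.mul_sum, hC_def]
  have hSpos : 0 < S := by
    rw [hS]
    positivity
  -- main combinatorial sum
  have hmain : ∑ I ∈ Psets, (c I * (∑ i ∈ I, (L i)⁻¹ * x i ^ 2)
        - (∑ i ∈ I, (L i)⁻¹ * x i) ^ 2) = (N2 : ℝ) * (C * Q - B ^ 2) := by
    have step1 : ∀ I : Finset (Fin (m + 2)),
        c I * (∑ i ∈ I, (L i)⁻¹ * x i ^ 2) - (∑ i ∈ I, (L i)⁻¹ * x i) ^ 2
          = ∑ i : Fin (m + 2), ∑ j : Fin (m + 2),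
              ((if i ∈ I then (1:ℝ) else 0) * (if j ∈ I then 1 else 0)) *
                ((L i)⁻¹ * ((L j)⁻¹ * x j ^ 2) - ((L i)⁻¹ * x i) * ((L j)⁻¹ * x j)) := by
      intro I
      simp only [c]
      rw [hsumI I (fun i => (L i)⁻¹), hsumI I (fun i => (L i)⁻¹ * x i ^ 2),
        hsumI I (fun i => (L i)⁻¹ * x i), sq (∑ i : Fin (m + 2), if i ∈ I then (L i)⁻¹ * x i else 0),
        Finset.sum_mul_sum, Finset.sum_mul_sum, ← Finset.sum_sub_distrib]
      apply Finset.sum_congr rfl; intro i _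
      rw [← Finset.sum_sub_distrib]
      apply Finset.sum_congr rfl; intro j _
      by_cases h1 : i ∈ I <;> by_cases h2 : j ∈ I <;> simp [h1, h2]
    rw [Finset.sum_congr rfl (fun I _ => step1 I)]
    rw [Finset.sum_comm]
    have step2 : ∀ i : Fin (m + 2),
        ∑ I ∈ Psets, ∑ j : Fin (m + 2),
            ((if i ∈ I then (1:ℝ) else 0) * (if j ∈ I then 1 else 0)) *
              ((L i)⁻¹ * ((L j)⁻¹ * x j ^ 2) - ((L i)⁻¹ * x i) * ((L j)⁻¹ * x j))
          = ∑ j : Fin (m + 2), (N2 : ℝ) *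
              ((L i)⁻¹ * ((L j)⁻¹ * x j ^ 2) - ((L i)⁻¹ * x i) * ((L j)⁻¹ * x j)) := by
      intro i
      rw [Finset.sum_comm]
      apply Finset.sum_congr rfl; intro j _
      rw [← Finset.sum_mul, hind i j]
      by_cases hij : i = j
      · subst hij
        simp only [if_true]
        ring
      · rw [if_neg hij]
    rw [Finset.sum_congr rfl (fun i _ => step2 i)]
    have : ∑ i : Fin (m + 2), ∑ j : Fin (m + 2), (N2 : ℝ) *
        ((L i)⁻¹ * ((L j)⁻¹ * x j ^ 2) - ((L i)⁻¹ * x i) * ((L j)⁻¹ * x j))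
        = (N2 : ℝ) * ((∑ i : Fin (m + 2), (L i)⁻¹) * (∑ j : Fin (m + 2), (L j)⁻¹ * x j ^ 2)
            - (∑ i : Fin (m + 2), (L i)⁻¹ * x i) * (∑ j : Fin (m + 2), (L j)⁻¹ * x j)) := by
      rw [Finset.sum_mul_sum, Finset.sum_mul_sum, ← Finset.sum_sub_distrib, Finset.mul_sum]
      apply Finset.sum_congr rfl; intro i _
      rw [← Finset.sum_sub_distrib, Finset.mul_sum]
    rw [this, hC_def, hQ_def, hB_def, sq]
  -- assemble
  have key : ((m:ℝ) + 1) * (N2 : ℝ) = (N1 : ℝ) * ((t:ℝ) + 1) := by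
    have := Nat.add_one_mul_choose_eq m t
    have h2 : (m + 1) * m.choose t = (m + 1).choose (t + 1) * (t + 1) := this
    rw [hN1_def, hN2_def]
    exact_mod_cast h2
  calc ∑ I ∈ Psets, p I * quadL (G I *ᵥ x)
      = ∑ I ∈ Psets, (c I * (∑ i ∈ I, (L i)⁻¹ * x i ^ 2)
          - (∑ i ∈ I, (L i)⁻¹ * x i) ^ 2) / S := by
        apply Finset.sum_congr rfl; intro I hI
        rw [hquadI I (hne I hI)]
        have hcI : (0:ℝ) < c I := hcpos I (hne I hI)
        simp only [p, ← hS_def]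
        field_simp
    _ = (N2 : ℝ) * (C * Q - B ^ 2) / S := by rw [← Finset.sum_div, hmain]
    _ = (((t + 2 : ℕ) : ℝ) - 1) / (((m + 2 : ℕ) : ℝ) - 1) * quadL (G Finset.univ *ᵥ x) := by
        rw [hquadU, hS]
        push_cast
        have hm1 : ((m:ℝ) + 2) - 1 = (m:ℝ) + 1 := by ring
        rw [hm1]
        have hN1ne : (N1 : ℝ) ≠ 0 := by exact_mod_cast hN1pos.ne'
        have hm1ne : ((m:ℝ) + 1) ≠ 0 := by positivity
        field_simp
        linear_combination (C * Q - B ^ 2) * key
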